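/- arXiv:math/0403003 — 3 statements merged into one kernel-verified Lean document; each statement's English description precedes it below -/
import Mathlib

section
/- Let D be a k-linear triangulated category of finite type and C a full triangulated subcategory. Then the inclusion functor C → D has a right adjoint if and only if every object X of D fits into a distinguished triangle A → X → B → A[1] with A in C and B in the right orthogonal C^⊥ (the full subcategory of objects Y with Hom(A,Y)=0 for all A in C). -/
/- STATEMENT 0: For a full triangulated subcategory `C` (modeled as a set of objects `S`
closed under isomorphism, shifts and extensions) of a k-linear triangulated category `D`
of finite type, the inclusion functor has a right adjoint iff every object `X` of `D`
fits into a distinguished triangle `A ⟶ X ⟶ B ⟶ A⟦1⟧` with `A ∈ S` and `B` in the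
right orthogonal of `S`. -/

open CategoryTheory Limits Pretriangulated

universe v u

/-- The set of objects of a strictly full triangulated subcategory. -/
structure IsTriangulatedSub (D : Type u) [Category.{v} D] [HasZeroObject D] [HasShift D ℤ]
    [Preadditive D] [∀ n : ℤ, (shiftFunctor D n).Additive] [Pretriangulated D]
    (S : Set D) : Prop where
  zero_mem : ∀ Z : D, Limits.IsZero Z → Z ∈ S
  iso_closed : ∀ ⦃X Y : D⦄, (X ≅ Y) → X ∈ S → Y ∈ S
  shift_mem : ∀ (X : D) (n : ℤ), X ∈ S → (X⟦n⟧ : D) ∈ S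
  ext_mem : ∀ (T : Triangle D), T ∈ (distTriang D) → T.obj₁ ∈ S → T.obj₃ ∈ S → T.obj₂ ∈ S

/-- Right orthogonal `S^⊥`: objects `Y` with `Hom(A, Y) = 0` for all `A ∈ S`. -/
def rightOrth (D : Type u) [Category.{v} D] [Preadditive D] (S : Set D) : Set D :=
  {Y | ∀ (A : D), A ∈ S → ∀ f : A ⟶ Y, f = 0}

section Aux

variable {D : Type u} [Category.{v} D] [Preadditive D]
    [HasZeroObject D] [HasShift D ℤ] [∀ n : ℤ, (shiftFunctor D n).Additive]
    [Pretriangulated D] {S : Set D}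

/-- Morphisms from an object of `S` to a shift of an object of `S^⊥` vanish. -/
lemma hom_to_shift_orth (hS : IsTriangulatedSub D S) {W B : D} (hW : W ∈ S)
    (hB : B ∈ rightOrth D S) (n : ℤ) (φ : W ⟶ (B⟦n⟧ : D)) : φ = 0 := by
  apply (shiftFunctor D (-n)).map_injective
  have h0 : φ⟦(-n : ℤ)⟧' ≫ (shiftFunctorCompIsoId D n (-n) (by omega)).hom.app B = 0 :=
    hB _ (hS.shift_mem W (-n) hW) _
  rw [Functor.map_zero]
  rw [← cancel_mono ((shiftFunctorCompIsoId D n (-n) (by omega)).hom.app B)]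
  simpa using h0

/-- If `B ∈ S^⊥`, then for any `W ∈ S`, composition with `f` is a bijection
`Hom(W,A) → Hom(W,X)`. -/
lemma bij_of_orth (hS : IsTriangulatedSub D S) {A X B : D}
    (hB : B ∈ rightOrth D S) {f : A ⟶ X} {g : X ⟶ B} {h : B ⟶ (A⟦(1:ℤ)⟧ : D)}
    (hT : Triangle.mk f g h ∈ distTriang D) {W : D} (hW : W ∈ S) :
    Function.Bijective (fun v : W ⟶ A => v ≫ f) := by
  constructor
  · intro v w hvw
    have hsub : (v - w) ≫ f = 0 := by
      rw [Preadditive.sub_comp, show v ≫ f = w ≫ f from hvw, sub_self]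
    obtain ⟨t, ht⟩ := Triangle.coyoneda_exact₂ _ (inv_rot_of_distTriang _ hT) (v - w)
      (by exact hsub)
    have ht0 : t = 0 := hom_to_shift_orth hS hW hB (-1) t
    have : v - w = 0 := by rw [ht, ht0]; exact zero_comp
    exact sub_eq_zero.1 this
  · intro u
    obtain ⟨v, hv⟩ := Triangle.coyoneda_exact₂ _ hT u (hB W hW _)
    exact ⟨v, hv.symm⟩

/-- Conversely, if composition with `f` is bijective `Hom(W,A) → Hom(W,X)` for every
`W ∈ S` (closed under shifts), then the cone `B` lies in `S^⊥`. -/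
lemma orth_of_bij (hS : IsTriangulatedSub D S) {A X B : D}
    {f : A ⟶ X} {g : X ⟶ B} {h : B ⟶ (A⟦(1:ℤ)⟧ : D)}
    (hT : Triangle.mk f g h ∈ distTriang D)
    (hbij : ∀ W : D, W ∈ S → Function.Bijective (fun v : W ⟶ A => v ≫ f)) :
    B ∈ rightOrth D S := by
  intro W hW φ
  -- Step 1 : `φ ≫ h = 0`.
  have hh : h ≫ f⟦(1:ℤ)⟧' = 0 := comp_distTriang_mor_zero₃₁ _ hT
  have hχf : (φ ≫ h) ≫ f⟦(1:ℤ)⟧' = 0 := by rw [Category.assoc, hh, comp_zero]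
  have hχ : φ ≫ h = 0 := by
    apply (shiftFunctor D (-1 : ℤ)).map_injective
    rw [Functor.map_zero]
    rw [← cancel_mono ((shiftFunctorCompIsoId D 1 (-1) (by omega)).hom.app A)]
    set ψ : (W⟦(-1:ℤ)⟧ : D) ⟶ A :=
      (φ ≫ h)⟦(-1:ℤ)⟧' ≫ (shiftFunctorCompIsoId D 1 (-1) (by omega)).hom.app A with hψ
    have hnat : (shiftFunctorCompIsoId D 1 (-1) (by omega)).hom.app A ≫ f
        = ((f⟦(1:ℤ)⟧')⟦(-1:ℤ)⟧') ≫ (shiftFunctorCompIsoId D 1 (-1) (by omega)).hom.app X := by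
      simpa using ((shiftFunctorCompIsoId D 1 (-1) (by omega)).hom.naturality f).symm
    have hψf : ψ ≫ f = 0 := by
      rw [hψ, Category.assoc, hnat, ← Functor.map_comp_assoc, hχf,
        Functor.map_zero, zero_comp]
    have hψ0 : ψ = 0 := by
      have := (hbij _ (hS.shift_mem W (-1) hW)).1 (a₁ := ψ) (a₂ := 0)
        (by simpa using hψf)
      exact this
    rw [hψ0, zero_comp]
  -- Step 2 : factor `φ` through `g`, then through `f ≫ g = 0`.
  obtain ⟨u, hu⟩ := Triangle.coyoneda_exact₃ _ hT φ hχ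
  obtain ⟨v, hv⟩ := (hbij W hW).2 u
  have hfg : f ≫ g = 0 := comp_distTriang_mor_zero₁₂ _ hT
  rw [hu, ← hv]
  show (v ≫ f) ≫ g = 0
  rw [Category.assoc, hfg, comp_zero]

end Aux

theorem stmt0 (k : Type*) [Field k]
    (D : Type u) [Category.{v} D] [Preadditive D] [CategoryTheory.Linear k D]
    [HasZeroObject D] [HasShift D ℤ] [∀ n : ℤ, (shiftFunctor D n).Additive]
    [Pretriangulated D]
    -- finite type: each graded piece of `Hom^•(X,Y)` is finite dimensional ...
    (hft : ∀ X Y : D, ∀ n : ℤ, FiniteDimensional k (X ⟶ (Y⟦n⟧ : D)))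
    -- ... and all but finitely many graded pieces vanish
    (hft' : ∀ X Y : D, ∃ N : ℕ, ∀ n : ℤ, (N : ℤ) < |n| → ∀ f : X ⟶ (Y⟦n⟧ : D), f = 0)
    (S : Set D) (hS : IsTriangulatedSub D S) :
    (ObjectProperty.ι (· ∈ S)).IsLeftAdjoint ↔
      ∀ X : D, ∃ (A B : D) (_ : A ∈ S) (_ : B ∈ rightOrth D S)
        (f : A ⟶ X) (g : X ⟶ B) (h : B ⟶ (A⟦(1:ℤ)⟧ : D)),
        Triangle.mk f g h ∈ distTriang D := by
  constructor
  · intro hadj X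
    obtain ⟨R, ⟨adj⟩⟩ := hadj
    set ι := ObjectProperty.ι (· ∈ S)
    set A : D := (R.obj X).obj with hAdef
    have hA : A ∈ S := (R.obj X).property
    set f : A ⟶ X := adj.counit.app X with hfdef
    obtain ⟨B, g, h, hT⟩ := distinguished_cocone_triangle f
    -- composition with `f` is bijective on `Hom(W, -)` for `W ∈ S`
    have hbij : ∀ W : D, W ∈ S → Function.Bijective (fun v : W ⟶ A => v ≫ f) := by
      intro W hW
      have : (fun v : W ⟶ A => v ≫ f) =
          (adj.homEquiv ⟨W, hW⟩ X).symm ∘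
            (fun v : W ⟶ A => ObjectProperty.homMk (X := ⟨W, hW⟩) (Y := R.obj X) v) := by
        funext v
        exact (adj.homEquiv_counit (X := ⟨W, hW⟩) (Y := X) (g := ObjectProperty.homMk v)).symm
      rw [this]
      exact (adj.homEquiv ⟨W, hW⟩ X).symm.bijective.comp
        ⟨fun a b hab => congrArg InducedCategory.Hom.hom hab, ObjectProperty.homMk_surjective⟩
    exact ⟨A, B, hA, orth_of_bij hS hT hbij, f, g, h, hT⟩
  · intro hyp
    choose A B hA hB f g h hT using hyp
    set ι := ObjectProperty.ι (· ∈ S)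
    let Gobj : D → ObjectProperty.FullSubcategory (· ∈ S) := fun X => ⟨A X, hA X⟩
    let e : ∀ (P : ObjectProperty.FullSubcategory (· ∈ S)) (X : D),
        (ι.obj P ⟶ X) ≃ (P ⟶ Gobj X) := fun P X =>
      (Equiv.ofBijective (fun v : P.obj ⟶ A X => v ≫ f X)
        (bij_of_orth hS (hB X) (hT X) P.property)).symm.trans
        { toFun := ObjectProperty.homMk (X := P) (Y := Gobj X), invFun := fun m => m.hom,
          left_inv := fun _ => rfl, right_inv := fun _ => rfl }
    have key : ∀ (P : ObjectProperty.FullSubcategory (· ∈ S)) (X : D) (u : ι.obj P ⟶ X),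
        (e P X u).hom ≫ f X = u := by
      intro P X u
      exact (Equiv.ofBijective (fun v : P.obj ⟶ A X => v ≫ f X)
        (bij_of_orth hS (hB X) (hT X) P.property)).apply_symm_apply u
    have he : ∀ (P' P : ObjectProperty.FullSubcategory (· ∈ S)) (X : D) (m : P' ⟶ P)
        (u : ι.obj P ⟶ X), e P' X (ι.map m ≫ u) = m ≫ e P X u := by
      intro P' P X m u
      apply ObjectProperty.hom_ext
      apply (bij_of_orth hS (hB X) (hT X) P'.property).1
      show (e P' X (ι.map m ≫ u)).hom ≫ f X
          = (ι.map m ≫ (e P X u).hom) ≫ f X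
      rw [key P' X (ι.map m ≫ u), Category.assoc, key P X u]
    exact ⟨_, ⟨Adjunction.adjunctionOfEquivRight e he⟩⟩
end

section
/- If C is a right admissible full triangulated subcategory of a triangulated category D, then the right orthogonal C^⊥ is left admissible in D, i.e., the inclusion C^⊥ → D has a left adjoint. -/
open CategoryTheory Limits Pretriangulated

universe v u

/- STATEMENT 1: if the full triangulated subcategory `C` (with object set `S`) is right
admissible, i.e. the inclusion `C ⥤ D` has a right adjoint, then the right orthogonal
`C^⊥` is left admissible in `D`, i.e. the inclusion `C^⊥ ⥤ D` has a left adjoint. -/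
theorem stmt1
    (D : Type u) [Category.{v} D] [Preadditive D]
    [HasZeroObject D] [HasShift D ℤ] [∀ n : ℤ, (shiftFunctor D n).Additive]
    [Pretriangulated D]
    (S : Set D) (hS : IsTriangulatedSub D S)
    (hadm : (ObjectProperty.ι (· ∈ S)).IsLeftAdjoint) :
    (ObjectProperty.ι (· ∈ rightOrth D S)).IsRightAdjoint := by

  classical
  set incl := ObjectProperty.ι (· ∈ S) with hincl
  have : incl.IsLeftAdjoint := hadm
  let G := incl.rightAdjoint
  let adj : incl ⊣ G := Adjunction.ofIsLeftAdjoint incl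
  -- Key: for any B ∈ S and X, composition with the counit is bijective
  have key : ∀ (b : ObjectProperty.FullSubcategory (· ∈ S)) (X : D),
      Function.Bijective (fun v : incl.obj b ⟶ incl.obj (G.obj X) =>
        v ≫ adj.counit.app X) := by
    intro b X
    constructor
    · intro v v' hvv
      obtain ⟨w, rfl⟩ := incl.map_surjective v
      obtain ⟨w', rfl⟩ := incl.map_surjective v'
      have : (adj.homEquiv b X).symm w = (adj.homEquiv b X).symm w' := by
        rw [Adjunction.homEquiv_counit, Adjunction.homEquiv_counit]
        exact hvv
      rw [(adj.homEquiv b X).symm.injective this]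
    · intro f
      refine ⟨incl.map ((adj.homEquiv b X) f), ?_⟩
      have := (adj.homEquiv b X).symm_apply_apply f
      rwa [Adjunction.homEquiv_counit] at this
  -- choose cones of the counit maps
  have hcone := fun X : D =>
    Pretriangulated.distinguished_cocone_triangle (adj.counit.app X)
  choose Z g h mem using hcone
  have hGS : ∀ X : D, incl.obj (G.obj X) ∈ S := fun X => (G.obj X).property
  -- Z X ∈ rightOrth D S
  have hZorth : ∀ X : D, Z X ∈ rightOrth D S := by
    intro X A hA f
    -- first: f ≫ h X = 0
    have hA' : (A⟦(-1 : ℤ)⟧ : D) ∈ S := hS.shift_mem A (-1) hA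
    have h1 : f ≫ h X = 0 := by
      set v := f ≫ h X with hv
      have hv0 : v ≫ (adj.counit.app X)⟦(1 : ℤ)⟧' = 0 := by
        have := comp_distTriang_mor_zero₃₁ _ (mem X)
        dsimp at this
        rw [hv, Category.assoc]; exact (congrArg (fun t => f ≫ t) this).trans comp_zero
      let iso := (shiftEquiv D (1 : ℤ)).counitIso.app A
      let w : (A⟦(-1 : ℤ)⟧ : D) ⟶ incl.obj (G.obj X) :=
        (shiftFunctor D (1 : ℤ)).preimage (iso.hom ≫ v)
      have hw : (shiftFunctor D (1 : ℤ)).map w = iso.hom ≫ v :=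
        (shiftFunctor D (1 : ℤ)).map_preimage _
      have hw0 : w ≫ adj.counit.app X = 0 := by
        apply (shiftFunctor D (1 : ℤ)).map_injective
        rw [Functor.map_comp, hw, Functor.map_zero]
        exact (Category.assoc _ _ _).trans ((congrArg (fun t => iso.hom ≫ t) hv0).trans comp_zero)
      have : w = (0 : (⟨A⟦(-1 : ℤ)⟧, hA'⟩ : ObjectProperty.FullSubcategory (· ∈ S)).obj ⟶
          incl.obj (G.obj X)) := by
        apply (key ⟨A⟦(-1 : ℤ)⟧, hA'⟩ X).1
        simpa using hw0
      have : iso.hom ≫ v = 0 := by rw [← hw, this, Functor.map_zero]; rfl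
      have : v = 0 := by
        rw [show v = iso.inv ≫ (iso.hom ≫ v) by simp, this, comp_zero]
      exact this
    obtain ⟨u, hu⟩ := Pretriangulated.Triangle.coyoneda_exact₃ _ (mem X) f h1
    obtain ⟨w, hw⟩ := (key ⟨A, hA⟩ X).2 u
    have h12 := comp_distTriang_mor_zero₁₂ _ (mem X)
    dsimp at h12 hu hw
    rw [hu, ← hw]
    exact (Category.assoc _ _ _).trans ((congrArg (fun t => w ≫ t) h12).trans comp_zero)
  -- the adjunction equivalence
  let F_obj : D → ObjectProperty.FullSubcategory (· ∈ rightOrth D S) := fun X => ⟨Z X, hZorth X⟩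
  have bij : ∀ (X : D) (Y : ObjectProperty.FullSubcategory (· ∈ rightOrth D S)),
      Function.Bijective (fun φ : Z X ⟶ Y.obj => g X ≫ φ) := by
    intro X Y
    constructor
    · intro φ φ' hφ
      have hφ' : g X ≫ φ = g X ≫ φ' := hφ
      have : g X ≫ (φ - φ') = 0 := by
        rw [Preadditive.comp_sub, hφ', sub_self]
      obtain ⟨ψ, hψ⟩ := Pretriangulated.Triangle.yoneda_exact₃ _ (mem X) (φ - φ') this
      have hψ0 : ψ = 0 := Y.property _ (hS.shift_mem _ 1 (hGS X)) ψ
      rw [hψ0, comp_zero] at hψ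
      exact sub_eq_zero.1 hψ
    · intro f
      have h0 : adj.counit.app X ≫ f = 0 := Y.property _ (hGS X) _
      obtain ⟨φ, hφ⟩ := Pretriangulated.Triangle.yoneda_exact₂ _ (mem X) f h0
      exact ⟨φ, hφ.symm⟩
  let e : ∀ (X : D) (Y : ObjectProperty.FullSubcategory (· ∈ rightOrth D S)),
      (F_obj X ⟶ Y) ≃ (X ⟶ (ObjectProperty.ι (· ∈ rightOrth D S)).obj Y) :=
    fun X Y => InducedCategory.homEquiv.trans (Equiv.ofBijective (fun φ : Z X ⟶ Y.obj => g X ≫ φ) (bij X Y))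
  have he : ∀ (X : D) (Y Y' : ObjectProperty.FullSubcategory (· ∈ rightOrth D S))
      (g' : Y ⟶ Y') (φ : F_obj X ⟶ Y),
      e X Y' (φ ≫ g') = e X Y φ ≫ (ObjectProperty.ι (· ∈ rightOrth D S)).map g' := by
    intro X Y Y' g' φ
    simp only [e, Equiv.trans_apply, Equiv.ofBijective_apply]
    exact (Category.assoc _ _ _).symm
  exact ⟨_, ⟨Adjunction.adjunctionOfEquivLeft e he⟩⟩
end

section
/- Let C1, C2 be full triangulated subcategories of a triangulated category D with C2 ⊆ C1^⊥, and let C be the full triangulated subcategory generated by C1 ∪ C2. If both C1 and C2 are left and right admissible in D, then C is left and right admissible in D. -/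
open CategoryTheory Limits Pretriangulated

set_option linter.unusedSectionVars false
set_option linter.unusedVariables false
set_option maxHeartbeats 1000000

universe v u

/-- The full triangulated subcategory generated by a set `S` of objects: the smallest
strictly full triangulated subcategory containing `S`. -/
def genTriang (D : Type u) [Category.{v} D] [HasZeroObject D] [HasShift D ℤ]
    [Preadditive D] [∀ n : ℤ, (shiftFunctor D n).Additive] [Pretriangulated D]
    (S : Set D) : Set D :=
  ⋂₀ {T : Set D | IsTriangulatedSub D T ∧ S ⊆ T}

/- STATEMENT 2: if `C₁, C₂` are full triangulated subcategories with `C₂ ⊆ C₁^⊥`, both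
left and right admissible in `D`, then the triangulated subcategory generated by
`C₁ ∪ C₂` is left and right admissible in `D`. -/
variable {D : Type u} [Category.{v} D] [Preadditive D] [HasZeroObject D] [HasShift D ℤ]
  [∀ n : ℤ, (shiftFunctor D n).Additive] [Pretriangulated D]

-- === from t2/t3/t4 (assume compiled; inline here) ===
noncomputable def shEquiv (E A : D) (n : ℤ) : ((E⟦(-n)⟧ : D) ⟶ A) ≃ (E ⟶ A⟦n⟧) where
  toFun g := ((shiftFunctorCompIsoId D (-n) n (neg_add_cancel n)).app E).inv ≫ (shiftFunctor D n).map g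
  invFun f := (shiftFunctor D n).preimage (((shiftFunctorCompIsoId D (-n) n (neg_add_cancel n)).app E).hom ≫ f)
  left_inv g := by apply (shiftFunctor D n).map_injective; simp
  right_inv f := by simp

lemma shEquiv_comp {E A Y : D} (n : ℤ) (g : (E⟦(-n)⟧ : D) ⟶ A) (f : A ⟶ Y) :
    shEquiv E A n g ≫ f⟦n⟧' = shEquiv E Y n (g ≫ f) := by simp [shEquiv]

noncomputable def shEquiv' (B E : D) (n : ℤ) : (B ⟶ (E⟦(-n)⟧ : D)) ≃ ((B⟦n⟧ : D) ⟶ E) where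
  toFun g := (shiftFunctor D n).map g ≫ ((shiftFunctorCompIsoId D (-n) n (neg_add_cancel n)).app E).hom
  invFun f := (shiftFunctor D n).preimage (f ≫ ((shiftFunctorCompIsoId D (-n) n (neg_add_cancel n)).app E).inv)
  left_inv g := by apply (shiftFunctor D n).map_injective; simp
  right_inv f := by simp

lemma shEquiv'_comp {B E Y : D} (n : ℤ) (g : B ⟶ (E⟦(-n)⟧ : D)) (f : Y ⟶ B) :
    f⟦n⟧' ≫ shEquiv' B E n g = shEquiv' Y E n (f ≫ g) := by simp [shEquiv']

lemma bij_post_shift {A Y : D} (f : A ⟶ Y) {S : Set D}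
    (hS : ∀ X ∈ S, ∀ n : ℤ, (X⟦n⟧ : D) ∈ S)
    (h : ∀ E ∈ S, Function.Bijective (fun g : E ⟶ A => g ≫ f))
    (E : D) (hE : E ∈ S) (n : ℤ) :
    Function.Bijective (fun g : E ⟶ (A⟦n⟧ : D) => g ≫ f⟦n⟧') := by
  have key : (fun g : E ⟶ (A⟦n⟧ : D) => g ≫ f⟦n⟧')
      = (shEquiv E Y n) ∘ (fun g : (E⟦(-n)⟧ : D) ⟶ A => g ≫ f) ∘ (shEquiv E A n).symm := by
    funext g
    obtain ⟨g', rfl⟩ := (shEquiv E A n).surjective g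
    simp only [Function.comp_apply, Equiv.symm_apply_apply]
    exact shEquiv_comp n g' f
  rw [key]
  exact ((shEquiv E Y n).bijective.comp (h _ (hS E hE (-n)))).comp (shEquiv E A n).symm.bijective

lemma bij_pre_shift {Y B : D} (f : Y ⟶ B) {S : Set D}
    (hS : ∀ X ∈ S, ∀ n : ℤ, (X⟦n⟧ : D) ∈ S)
    (h : ∀ E ∈ S, Function.Bijective (fun v : B ⟶ E => f ≫ v))
    (E : D) (hE : E ∈ S) (n : ℤ) :
    Function.Bijective (fun v : (B⟦n⟧ : D) ⟶ E => f⟦n⟧' ≫ v) := by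
  have key : (fun v : (B⟦n⟧ : D) ⟶ E => f⟦n⟧' ≫ v)
      = (shEquiv' Y E n) ∘ (fun v : B ⟶ (E⟦(-n)⟧ : D) => f ≫ v) ∘ (shEquiv' B E n).symm := by
    funext v
    obtain ⟨v', rfl⟩ := (shEquiv' B E n).surjective v
    simp only [Function.comp_apply, Equiv.symm_apply_apply]
    exact (shEquiv'_comp n v' f).symm ▸ rfl
  rw [key]
  exact ((shEquiv' Y E n).bijective.comp (h _ (hS E hE (-n)))).comp (shEquiv' B E n).symm.bijective

lemma zero_post_shift {Z : D} {S : Set D}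
    (hS : ∀ X ∈ S, ∀ n : ℤ, (X⟦n⟧ : D) ∈ S)
    (h : ∀ A ∈ S, ∀ g : A ⟶ Z, g = 0)
    (A : D) (hA : A ∈ S) (n : ℤ) (g : A ⟶ (Z⟦n⟧ : D)) : g = 0 := by
  obtain ⟨g', rfl⟩ := (shEquiv A Z n).surjective g
  rw [h _ (hS A hA (-n)) g']
  simp [shEquiv]

lemma zero_pre_shift {Z : D} {S : Set D}
    (hS : ∀ X ∈ S, ∀ n : ℤ, (X⟦n⟧ : D) ∈ S)
    (h : ∀ E ∈ S, ∀ g : Z ⟶ E, g = 0)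
    (E : D) (hE : E ∈ S) (n : ℤ) (g : (Z⟦n⟧ : D) ⟶ E) : g = 0 := by
  obtain ⟨g', rfl⟩ := (shEquiv' Z E n).surjective g
  rw [h _ (hS E hE (-n)) g']
  simp [shEquiv']

lemma subset_genTriang (S : Set D) : S ⊆ genTriang D S := by
  intro x hx T hT
  exact hT.2 hx

lemma genTriang_isSub (S : Set D) : IsTriangulatedSub D (genTriang D S) where
  zero_mem Z hZ := fun T hT => hT.1.zero_mem Z hZ
  iso_closed _ _ e hX := fun T hT => hT.1.iso_closed e (hX T hT)
  shift_mem X n hX := fun T hT => hT.1.shift_mem X n (hX T hT)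
  ext_mem T hT h1 h3 := fun U hU => hU.1.ext_mem T hT (h1 U hU) (h3 U hU)

lemma genTriang_min {S T : Set D} (hT : IsTriangulatedSub D T) (hST : S ⊆ T) :
    genTriang D S ⊆ T := fun _ hx => hx T ⟨hT, hST⟩

lemma rightOrthSub (N : D) :
    IsTriangulatedSub D {W : D | ∀ (n : ℤ) (f : W ⟶ (N⟦n⟧ : D)), f = 0} where
  zero_mem _ hZ := fun _ f => hZ.eq_of_src f 0
  iso_closed X Y e hX := fun n f => by
    have : e.hom ≫ f = 0 := hX n (e.hom ≫ f)
    rw [← Category.id_comp f, ← e.inv_hom_id, Category.assoc, this, Limits.comp_zero]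
  shift_mem X m hX := by
    intro n f
    apply (shiftFunctor D (-m)).map_injective
    rw [Functor.map_zero]
    have h0 : ((shiftFunctorCompIsoId D m (-m) (add_neg_cancel m)).app X).inv ≫
        (shiftFunctor D (-m)).map f ≫ ((shiftFunctorAdd' D n (-m) (n - m) (by ring)).app N).inv
        = 0 := hX (n - m) _
    have := congrArg (fun t => ((shiftFunctorCompIsoId D m (-m) (add_neg_cancel m)).app X).hom ≫
      t ≫ ((shiftFunctorAdd' D n (-m) (n - m) (by ring)).app N).hom) h0
    simpa using this
  ext_mem T hT h1 h3 := by
    intro n f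
    obtain ⟨g, hg⟩ := Triangle.yoneda_exact₂ T hT f (h1 n (T.mor₁ ≫ f))
    rw [hg, h3 n g, Limits.comp_zero]

lemma leftOrthSub (M : D) :
    IsTriangulatedSub D {W : D | ∀ (n : ℤ) (f : (M⟦n⟧ : D) ⟶ W), f = 0} where
  zero_mem _ hZ := fun _ f => hZ.eq_of_tgt f 0
  iso_closed X Y e hX := fun n f => by
    have : f ≫ e.inv = 0 := hX n (f ≫ e.inv)
    rw [← Category.comp_id f, ← e.inv_hom_id, ← Category.assoc, this, Limits.zero_comp]
  shift_mem X m hX := by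
    intro n f
    apply (shiftFunctor D (-m)).map_injective
    rw [Functor.map_zero]
    have h0 : ((shiftFunctorAdd' D n (-m) (n - m) (by ring)).app M).hom ≫
        (shiftFunctor D (-m)).map f ≫ ((shiftFunctorCompIsoId D m (-m) (add_neg_cancel m)).app X).hom
        = 0 := hX (n - m) _
    have := congrArg (fun t => ((shiftFunctorAdd' D n (-m) (n - m) (by ring)).app M).inv ≫
      t ≫ ((shiftFunctorCompIsoId D m (-m) (add_neg_cancel m)).app X).inv) h0
    simpa using this
  ext_mem T hT h1 h3 := by
    intro n f
    obtain ⟨g, hg⟩ := Triangle.coyoneda_exact₂ T hT f (h3 n (f ≫ T.mor₂))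
    rw [hg, h1 n g, Limits.zero_comp]

lemma counit_universal {S : Set D} (h : (ObjectProperty.ι (· ∈ S)).IsLeftAdjoint)
    (Y : D) : ∃ (A : D) (_ : A ∈ S) (ε : A ⟶ Y),
      ∀ E ∈ S, Function.Bijective (fun g : E ⟶ A => g ≫ ε) := by
  obtain ⟨R, ⟨adj⟩⟩ := h
  refine ⟨(R.obj Y).obj, (R.obj Y).property, adj.counit.app Y, ?_⟩
  intro E hE
  let E' : ObjectProperty.FullSubcategory (· ∈ S) := ⟨E, hE⟩
  have key : (fun g : E ⟶ (R.obj Y).obj => g ≫ adj.counit.app Y)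
      = fun g : E ⟶ (R.obj Y).obj => (adj.homEquiv E' Y).symm (ObjectProperty.homMk g) := by
    funext g
    rw [Adjunction.homEquiv_counit]
    rfl
  rw [key]
  exact (adj.homEquiv E' Y).symm.bijective.comp
    ⟨fun x y h => congrArg (·.hom) h, ObjectProperty.homMk_surjective⟩

lemma unit_universal {S : Set D} (h : (ObjectProperty.ι (· ∈ S)).IsRightAdjoint)
    (Y : D) : ∃ (B : D) (_ : B ∈ S) (η : Y ⟶ B),
      ∀ E ∈ S, Function.Bijective (fun v : B ⟶ E => η ≫ v) := by
  obtain ⟨L, ⟨adj⟩⟩ := h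
  refine ⟨(L.obj Y).obj, (L.obj Y).property, adj.unit.app Y, ?_⟩
  intro E hE
  let E' : ObjectProperty.FullSubcategory (· ∈ S) := ⟨E, hE⟩
  have key : (fun v : (L.obj Y).obj ⟶ E => adj.unit.app Y ≫ v)
      = fun v : (L.obj Y).obj ⟶ E => adj.homEquiv Y E' (ObjectProperty.homMk v) := by
    funext v
    rw [Adjunction.homEquiv_unit]
    rfl
  rw [key]
  exact (adj.homEquiv Y E').bijective.comp
    ⟨fun x y h => congrArg (·.hom) h, ObjectProperty.homMk_surjective⟩

lemma inj_of_ker_post {W X Y : D} (f : X ⟶ Y) (h : ∀ g : W ⟶ X, g ≫ f = 0 → g = 0) :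
    Function.Injective (fun g : W ⟶ X => g ≫ f) := by
  intro g₁ g₂ hg
  have hg' : g₁ ≫ f = g₂ ≫ f := hg
  rw [← sub_eq_zero]
  apply h
  rw [Preadditive.sub_comp, hg', sub_self]

lemma inj_of_ker_pre {W X Y : D} (u : Y ⟶ X) (h : ∀ v : X ⟶ W, u ≫ v = 0 → v = 0) :
    Function.Injective (fun v : X ⟶ W => u ≫ v) := by
  intro v₁ v₂ hv
  have hv' : u ≫ v₁ = u ≫ v₂ := hv
  rw [← sub_eq_zero]
  apply h
  rw [Preadditive.comp_sub, hv', sub_self]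

-- ======= MAIN right-universal construction =======
lemma right_universal (S₁ S₂ : Set D) (hS₁ : IsTriangulatedSub D S₁)
    (hS₂ : IsTriangulatedSub D S₂) (h21 : S₂ ⊆ rightOrth D S₁)
    (h₁r : (ObjectProperty.ι (· ∈ S₁)).IsLeftAdjoint)
    (h₂r : (ObjectProperty.ι (· ∈ S₂)).IsLeftAdjoint) (Y : D) :
    ∃ (X : D) (_ : X ∈ genTriang D (S₁ ∪ S₂)) (f : X ⟶ Y),
      ∀ W ∈ genTriang D (S₁ ∪ S₂), Function.Bijective (fun g : W ⟶ X => g ≫ f) := by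
  set gen := genTriang D (S₁ ∪ S₂) with hgen_def
  have hgen := genTriang_isSub (D := D) (S₁ ∪ S₂)
  have hS1shift : ∀ X ∈ S₁, ∀ n : ℤ, (X⟦n⟧ : D) ∈ S₁ := fun X hX n => hS₁.shift_mem X n hX
  have hS2shift : ∀ X ∈ S₂, ∀ n : ℤ, (X⟦n⟧ : D) ∈ S₂ := fun X hX n => hS₂.shift_mem X n hX
  have hS12shift : ∀ X ∈ S₁ ∪ S₂, ∀ n : ℤ, (X⟦n⟧ : D) ∈ S₁ ∪ S₂ := by
    rintro X (hX | hX) n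
    · exact Or.inl (hS₁.shift_mem X n hX)
    · exact Or.inr (hS₂.shift_mem X n hX)
  -- Step 1: counit of S₁ at Y
  obtain ⟨A1, hA1, a, ha⟩ := counit_universal h₁r Y
  -- Step 2: cone
  obtain ⟨Y', b, c, hT2⟩ := distinguished_cocone_triangle a
  set T2 := Triangle.mk a b c with hT2def
  -- Step 3 : Y' is right-orthogonal to S₁
  have hY' : ∀ E ∈ S₁, ∀ g : E ⟶ Y', g = 0 := by
    intro E hE g
    have hca : c ≫ a⟦(1:ℤ)⟧' = 0 := comp_distTriang_mor_zero₃₁ T2 hT2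
    have h2 : g ≫ c = 0 := by
      apply (bij_post_shift a hS1shift ha E hE 1).injective
      show (g ≫ c) ≫ a⟦(1:ℤ)⟧' = (0 : E ⟶ (A1⟦(1:ℤ)⟧ : D)) ≫ a⟦(1:ℤ)⟧'
      rw [Category.assoc, hca, Limits.comp_zero, Limits.zero_comp]
    obtain ⟨g', hg'⟩ := Triangle.coyoneda_exact₃ T2 hT2 g h2
    obtain ⟨g'', hg''⟩ := (ha E hE).surjective g'
    have hg'c : g = g' ≫ b := hg'
    have hg''c : g'' ≫ a = g' := hg''
    have hab : a ≫ b = 0 := comp_distTriang_mor_zero₁₂ T2 hT2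
    have : g = g'' ≫ (a ≫ b) := by
      erw [hg'c, ← hg''c, Category.assoc]; rfl
    rw [this, hab, Limits.comp_zero]
  -- Step 4 : counit of S₂ at Y'
  obtain ⟨A2, hA2, ε2, hε2⟩ := counit_universal h₂r Y'
  -- Step 5/6 : triangle A1 → X → A2 with mor₃ = ε2 ≫ c
  obtain ⟨X, i, p, hT1⟩ := distinguished_cocone_triangle₂ (ε2 ≫ c)
  set T1 := Triangle.mk i p (ε2 ≫ c) with hT1def
  have hX : X ∈ gen := by
    refine hgen.ext_mem T1 hT1 ?_ ?_
    · exact subset_genTriang _ (Or.inl hA1)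
    · exact subset_genTriang _ (Or.inr hA2)
  -- Step 8 : complete to morphism of triangles
  obtain ⟨f0, hf1, hf2⟩ := complete_distinguished_triangle_morphism₂ T1 T2 hT1 hT2 (𝟙 A1) ε2
    (by show (ε2 ≫ c) ≫ (𝟙 A1)⟦(1:ℤ)⟧' = ε2 ≫ c; simp)
  let f : X ⟶ Y := f0
  -- hf1 : i ≫ f = 𝟙 A1 ≫ a, hf2 : p ≫ ε2 = f ≫ b
  have hif : i ≫ f = a := by
    have : i ≫ f0 = 𝟙 A1 ≫ a := hf1
    rw [Category.id_comp] at this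
    exact this
  have hpf : p ≫ ε2 = f ≫ b := hf2
  -- triangle morphism
  let φ : T1 ⟶ T2 := Triangle.homMk T1 T2 (𝟙 A1) f ε2
    (by show i ≫ f = 𝟙 A1 ≫ a; rw [Category.id_comp, hif])
    (by show p ≫ ε2 = f ≫ b; exact hpf)
    (by show (ε2 ≫ c) ≫ (𝟙 A1)⟦(1:ℤ)⟧' = ε2 ≫ c; simp)
  have square0 : (T1.invRotate).mor₁ ≫ 𝟙 (T1.invRotate.obj₂) = ((shiftFunctor D (-1 : ℤ)).map ε2) ≫ (T2.invRotate).mor₁ :=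
    ((invRotate D).map φ).comm₁
  have square : (T1.invRotate).mor₁ = ((shiftFunctor D (-1 : ℤ)).map ε2) ≫ (T2.invRotate).mor₁ := by
    rw [← square0, Category.comp_id]
  -- Step 10 : bijectivity on S₁ ∪ S₂
  have hbij : ∀ E ∈ S₁ ∪ S₂, Function.Bijective (fun g : E ⟶ X => g ≫ f) := by
    rintro E (hE | hE)
    · constructor
      · apply inj_of_ker_post
        intro g hgf
        have hgp : g ≫ p = 0 := h21 hA2 E hE (g ≫ p)
        obtain ⟨g1, hg1⟩ := Triangle.coyoneda_exact₂ T1 hT1 g hgp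
        have hg1c : g = g1 ≫ i := hg1
        have hg1a : g1 ≫ a = 0 := by
          have : g1 ≫ a = g ≫ f := by erw [← hif, hg1c, Category.assoc]; rfl
          rw [this, hgf]
        have : g1 = 0 := by
          apply (ha E hE).injective
          show g1 ≫ a = 0 ≫ a
          rw [hg1a, Limits.zero_comp]
        erw [hg1c, this, Limits.zero_comp]
      · intro h
        have hb : h ≫ b = 0 := hY' E hE (h ≫ b)
        obtain ⟨h1, hh1⟩ := Triangle.coyoneda_exact₂ T2 hT2 h hb
        have hh1c : h = h1 ≫ a := hh1
        exact ⟨h1 ≫ i, by show (h1 ≫ i) ≫ f = h; erw [Category.assoc, hif, ← hh1c]⟩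
    · constructor
      · apply inj_of_ker_post
        intro g hgf
        have hgp : g ≫ p = 0 := by
          apply (hε2 E hE).injective
          show (g ≫ p) ≫ ε2 = 0 ≫ ε2
          rw [Category.assoc, hpf, ← Category.assoc, hgf, Limits.zero_comp, Limits.zero_comp]
        obtain ⟨g1, hg1⟩ := Triangle.coyoneda_exact₂ T1 hT1 g hgp
        have hg1c : g = g1 ≫ i := hg1
        have hg1a : g1 ≫ a = 0 := by
          have : g1 ≫ a = g ≫ f := by erw [← hif, hg1c, Category.assoc]; rfl
          rw [this, hgf]
        obtain ⟨g0, hg0⟩ := Triangle.coyoneda_exact₂ T2.invRotate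
          (inv_rot_of_distTriang T2 hT2) g1 hg1a
        obtain ⟨g0', hg0'⟩ := (bij_post_shift ε2 hS2shift hε2 E hE (-1)).surjective g0
        have hg0'' : g0' ≫ (shiftFunctor D (-1 : ℤ)).map ε2 = g0 := hg0'
        have hzero : (T1.invRotate).mor₁ ≫ (T1.invRotate).mor₂ = 0 :=
          comp_distTriang_mor_zero₁₂ T1.invRotate (inv_rot_of_distTriang T1 hT1)
        have hi : (T1.invRotate).mor₂ = i := rfl
        have : g = g0' ≫ ((T1.invRotate).mor₁ ≫ (T1.invRotate).mor₂) := by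
          erw [hi, hg1c, hg0, ← hg0'', square]
          exact ((Category.assoc _ _ _).trans (Category.assoc _ _ _)).trans (congrArg (fun t => g0' ≫ t) (Category.assoc _ _ _).symm)
        erw [this, hzero, Limits.comp_zero]; rfl
      · intro h
        obtain ⟨h2, hh2⟩ := (hε2 E hE).surjective (h ≫ b)
        have hh2' : h2 ≫ ε2 = h ≫ b := hh2
        have hbc : b ≫ c = 0 := comp_distTriang_mor_zero₂₃ T2 hT2
        have hw : h2 ≫ (ε2 ≫ c) = 0 := by
          rw [← Category.assoc, hh2', Category.assoc, hbc, Limits.comp_zero]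
        obtain ⟨x, hx'⟩ := Triangle.coyoneda_exact₃ T1 hT1 h2 hw
        let x' : E ⟶ X := x
        have hx'' : h2 = x' ≫ p := hx'
        have hdiff : (x' ≫ f - h) ≫ b = 0 := by
          rw [Preadditive.sub_comp, Category.assoc, ← hpf, ← Category.assoc, ← hx'', hh2',
            sub_self]
        obtain ⟨y, hy⟩ := Triangle.coyoneda_exact₂ T2 hT2 (x' ≫ f - h) hdiff
        have hy' : x' ≫ f - h = y ≫ a := hy
        refine ⟨x' - y ≫ i, ?_⟩
        show (x' - y ≫ i) ≫ f = h
        erw [Preadditive.sub_comp, Category.assoc, hif, ← hy']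
        abel
  -- Step 11-14 : cone of f and orthogonality
  obtain ⟨N, gN, δ, hTN⟩ := distinguished_cocone_triangle f
  set TN := Triangle.mk f gN δ with hTNdef
  have hδf : δ ≫ f⟦(1:ℤ)⟧' = 0 := comp_distTriang_mor_zero₃₁ TN hTN
  have hfg : f ≫ gN = 0 := comp_distTriang_mor_zero₁₂ TN hTN
  have hNorth : ∀ E ∈ S₁ ∪ S₂, ∀ h : E ⟶ N, h = 0 := by
    intro E hE h
    have h1 : h ≫ δ = 0 := by
      apply (bij_post_shift f hS12shift hbij E hE 1).injective
      show (h ≫ δ) ≫ f⟦(1:ℤ)⟧' = (0 : E ⟶ (X⟦(1:ℤ)⟧ : D)) ≫ f⟦(1:ℤ)⟧'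
      rw [Category.assoc, hδf, Limits.comp_zero, Limits.zero_comp]
    obtain ⟨h', hh'⟩ := Triangle.coyoneda_exact₃ TN hTN h h1
    obtain ⟨h'', hh''⟩ := (hbij E hE).surjective h'
    have hh'c : h = h' ≫ gN := hh'
    have hh''2 : h'' ≫ f = h' := hh''
    have : h = h'' ≫ (f ≫ gN) := by
      erw [hh'c, ← hh''2, Category.assoc]; rfl
    rw [this, hfg, Limits.comp_zero]
  have hNgen : ∀ W ∈ gen, ∀ (n : ℤ) (h : W ⟶ (N⟦n⟧ : D)), h = 0 := by
    have hsub : gen ⊆ {W : D | ∀ (n : ℤ) (f : W ⟶ (N⟦n⟧ : D)), f = 0} := by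
      apply genTriang_min (rightOrthSub N)
      intro E hE
      exact fun n g => zero_post_shift hS12shift hNorth E hE n g
    intro W hW
    exact hsub hW
  have hNgen0 : ∀ W ∈ gen, ∀ h : W ⟶ N, h = 0 := by
    intro W hW h
    have h0 : h ≫ ((shiftFunctorZero D ℤ).app N).inv = 0 := hNgen W hW 0 _
    have := congrArg (fun t => t ≫ ((shiftFunctorZero D ℤ).app N).hom) h0
    simpa using this
  -- Step 15 : bijectivity for all of gen
  refine ⟨X, hX, f, ?_⟩
  intro W hW
  constructor
  · apply inj_of_ker_post
    intro g hgf
    obtain ⟨g', hg'⟩ := Triangle.coyoneda_exact₂ TN.invRotate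
      (inv_rot_of_distTriang TN hTN) g (show g ≫ f = 0 from hgf)
    have : g' = 0 := hNgen W hW (-1) g'
    rw [hg', this, Limits.zero_comp]; rfl
  · intro h
    have h1 : h ≫ gN = 0 := hNgen0 W hW (h ≫ gN)
    obtain ⟨h', hh'⟩ := Triangle.coyoneda_exact₂ TN hTN h h1
    exact ⟨h', hh'.symm⟩

-- ======= MAIN left-universal construction =======
lemma left_universal (S₁ S₂ : Set D) (hS₁ : IsTriangulatedSub D S₁)
    (hS₂ : IsTriangulatedSub D S₂) (h21 : S₂ ⊆ rightOrth D S₁)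
    (h₁l : (ObjectProperty.ι (· ∈ S₁)).IsRightAdjoint)
    (h₂l : (ObjectProperty.ι (· ∈ S₂)).IsRightAdjoint) (Y : D) :
    ∃ (X : D) (_ : X ∈ genTriang D (S₁ ∪ S₂)) (u : Y ⟶ X),
      ∀ W ∈ genTriang D (S₁ ∪ S₂), Function.Bijective (fun v : X ⟶ W => u ≫ v) := by
  set gen := genTriang D (S₁ ∪ S₂) with hgen_def
  have hgen := genTriang_isSub (D := D) (S₁ ∪ S₂)
  have hS1shift : ∀ X ∈ S₁, ∀ n : ℤ, (X⟦n⟧ : D) ∈ S₁ := fun X hX n => hS₁.shift_mem X n hX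
  have hS2shift : ∀ X ∈ S₂, ∀ n : ℤ, (X⟦n⟧ : D) ∈ S₂ := fun X hX n => hS₂.shift_mem X n hX
  have hS12shift : ∀ X ∈ S₁ ∪ S₂, ∀ n : ℤ, (X⟦n⟧ : D) ∈ S₁ ∪ S₂ := by
    rintro X (hX | hX) n
    · exact Or.inl (hS₁.shift_mem X n hX)
    · exact Or.inr (hS₂.shift_mem X n hX)
  -- Step 1 : unit of S₂ at Y
  obtain ⟨B2, hB2, η2, hη2⟩ := unit_universal h₂l Y
  obtain ⟨C2, q, r, hT2'⟩ := distinguished_cocone_triangle η2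
  set T2' := Triangle.mk η2 q r with hT2'def
  -- C2 is left orthogonal to S₂
  have hC2 : ∀ E ∈ S₂, ∀ u0 : C2 ⟶ E, u0 = 0 := by
    intro E hE u0
    have hqu : q ≫ u0 = 0 := by
      apply (hη2 E hE).injective
      show η2 ≫ q ≫ u0 = η2 ≫ 0
      have h12 : η2 ≫ q = 0 := comp_distTriang_mor_zero₁₂ T2' hT2'
      rw [← Category.assoc, h12, Limits.zero_comp, Limits.comp_zero]
    obtain ⟨v, hv⟩ := Triangle.yoneda_exact₃ T2' hT2' u0 hqu
    have hvc : u0 = r ≫ v := hv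
    obtain ⟨v', hv'⟩ := (bij_pre_shift η2 hS2shift hη2 E hE 1).surjective v
    have hv'c : η2⟦(1:ℤ)⟧' ≫ v' = v := hv'
    have hrη : r ≫ η2⟦(1:ℤ)⟧' = 0 := comp_distTriang_mor_zero₃₁ T2' hT2'
    rw [hvc, ← hv'c, ← Category.assoc, hrη, Limits.zero_comp]
  -- Step 2 : inverse rotation
  set T2d := T2'.invRotate with hT2ddef
  have hT2d : T2d ∈ distTriang D := inv_rot_of_distTriang T2' hT2'
  have hYd : ∀ E ∈ S₂, ∀ g : (C2⟦(-1:ℤ)⟧ : D) ⟶ E, g = 0 := by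
    intro E hE g
    exact zero_pre_shift hS2shift hC2 E hE (-1) g
  -- Step 3 : unit of S₁ at C2⟦-1⟧
  obtain ⟨B1, hB1, η1, hη1⟩ := unit_universal h₁l ((C2 : D)⟦(-1:ℤ)⟧)
  -- Step 4 : triangle B1 → X → B2 with mor₃ = wd
  have hmor2 : T2d.mor₂ = η2 := rfl
  set wd := T2d.mor₃ ≫ η1⟦(1:ℤ)⟧' with hwddef
  obtain ⟨X, i', p', hT1d⟩ := distinguished_cocone_triangle₂ wd
  set T1d := Triangle.mk i' p' wd with hT1ddef
  have hX : X ∈ gen := by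
    refine hgen.ext_mem T1d hT1d ?_ ?_
    · exact subset_genTriang _ (Or.inl hB1)
    · exact subset_genTriang _ (Or.inr hB2)
  -- Step 5 : complete to a morphism of triangles T2d ⟶ T1d
  obtain ⟨u0, hu1, hu2⟩ := complete_distinguished_triangle_morphism₂ T2d T1d hT2d hT1d η1 (𝟙 B2)
    (by show T2d.mor₃ ≫ η1⟦(1:ℤ)⟧' = 𝟙 B2 ≫ wd; erw [Category.id_comp])
  let u : Y ⟶ X := u0
  have hru : T2d.mor₁ ≫ u = η1 ≫ i' := hu1
  have hu2' : T2d.mor₂ ≫ 𝟙 (T2d.obj₃) = u ≫ p' := hu2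
  have hη2u : η2 = u ≫ p' := by
    rw [← hu2', Category.comp_id, hmor2]
  -- triangle morphism and inverse rotation square
  let φd : T2d ⟶ T1d := Triangle.homMk T2d T1d η1 u (𝟙 B2) hu1 hu2
    (by show T2d.mor₃ ≫ η1⟦(1:ℤ)⟧' = 𝟙 B2 ≫ wd; erw [Category.id_comp])
  have sq0 : (T2d.invRotate).mor₁ ≫ η1 =
      ((shiftFunctor D (-1:ℤ)).map (𝟙 (T2d.obj₃))) ≫ (T1d.invRotate).mor₁ :=
    ((invRotate D).map φd).comm₁
  have sq : (T2d.invRotate).mor₁ ≫ η1 = (T1d.invRotate).mor₁ := by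
    erw [sq0, CategoryTheory.Functor.map_id, Category.id_comp]
  -- Step 6 : bijectivity on S₁ ∪ S₂
  have hbij : ∀ E ∈ S₁ ∪ S₂, Function.Bijective (fun v : X ⟶ E => u ≫ v) := by
    rintro E (hE | hE)
    · -- E ∈ S₁
      constructor
      · apply inj_of_ker_pre
        intro v huv
        have hiv : i' ≫ v = 0 := by
          apply (hη1 E hE).injective
          show η1 ≫ i' ≫ v = η1 ≫ 0
          erw [← Category.assoc, ← hru, Category.assoc, huv, Limits.comp_zero,
            Limits.comp_zero]
        obtain ⟨y, hy⟩ := Triangle.yoneda_exact₂ T1d hT1d v hiv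
        have hyc : v = p' ≫ y := hy
        have hη2y : η2 ≫ y = 0 := by
          erw [hη2u, Category.assoc, ← hyc, huv]
        obtain ⟨z, hz⟩ := Triangle.yoneda_exact₃ T2d hT2d y (by rw [hmor2]; exact hη2y)
        have hzc : y = T2d.mor₃ ≫ z := hz
        obtain ⟨z', hz'⟩ := (bij_pre_shift η1 hS1shift hη1 E hE 1).surjective z
        have hz'c : η1⟦(1:ℤ)⟧' ≫ z' = z := hz'
        have hpw : p' ≫ wd = 0 := comp_distTriang_mor_zero₂₃ T1d hT1d
        have : v = (p' ≫ wd) ≫ z' := by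
          rw [hyc, hzc, ← hz'c, hwddef]
          simp only [Category.assoc]; rfl
        rw [this, hpw, Limits.zero_comp]
      · intro h
        obtain ⟨h2, hh2⟩ := (hη1 E hE).surjective (T2d.mor₁ ≫ h)
        have hh2c : η1 ≫ h2 = T2d.mor₁ ≫ h := hh2
        have h012 : T2d.invRotate.mor₁ ≫ T2d.mor₁ = 0 :=
          comp_distTriang_mor_zero₁₂ T2d.invRotate (inv_rot_of_distTriang T2d hT2d)
        have hed : (T1d.invRotate).mor₁ ≫ h2 = 0 := by
          erw [← sq, Category.assoc, hh2c, ← Category.assoc, h012, Limits.zero_comp]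
        obtain ⟨v0, hv⟩ := Triangle.yoneda_exact₂ T1d.invRotate
          (inv_rot_of_distTriang T1d hT1d) h2 hed
        let v : X ⟶ E := v0
        have hvc : h2 = i' ≫ v := hv
        have hzero : T2d.mor₁ ≫ (u ≫ v - h) = 0 := by
          erw [Preadditive.comp_sub, ← Category.assoc, hru, Category.assoc, ← hvc, hh2c,
            sub_self]
        obtain ⟨y, hy⟩ := Triangle.yoneda_exact₂ T2d hT2d (u ≫ v - h) hzero
        have hyc : u ≫ v - h = η2 ≫ y := by rw [hy, hmor2]; rfl
        refine ⟨v - p' ≫ y, ?_⟩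
        show u ≫ (v - p' ≫ y) = h
        erw [Preadditive.comp_sub, ← Category.assoc, ← hη2u, ← hyc]
        abel
    · -- E ∈ S₂
      constructor
      · apply inj_of_ker_pre
        intro v huv
        have hiv : i' ≫ v = 0 := h21 hE B1 hB1 (i' ≫ v)
        obtain ⟨y, hy⟩ := Triangle.yoneda_exact₂ T1d hT1d v hiv
        have hyc : v = p' ≫ y := hy
        have hη2y : η2 ≫ y = 0 := by
          erw [hη2u, Category.assoc, ← hyc, huv]
        have : y = 0 := by
          apply (hη2 E hE).injective
          show η2 ≫ y = η2 ≫ 0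
          rw [hη2y, Limits.comp_zero]
        erw [hyc, this, Limits.comp_zero]
      · intro h
        have h0 : T2d.mor₁ ≫ h = 0 := hYd E hE (T2d.mor₁ ≫ h)
        obtain ⟨h1, hh1⟩ := Triangle.yoneda_exact₂ T2d hT2d h h0
        have hh1c : h = η2 ≫ h1 := by rw [hh1, hmor2]; rfl
        refine ⟨p' ≫ h1, ?_⟩
        show u ≫ p' ≫ h1 = h
        rw [← Category.assoc, ← hη2u, hh1c]; rfl
  -- Step 7 : cone of u and left orthogonality
  obtain ⟨M, gM, δ', hTK⟩ := distinguished_cocone_triangle u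
  set TK := Triangle.mk u gM δ' with hTKdef
  have hug : u ≫ gM = 0 := comp_distTriang_mor_zero₁₂ TK hTK
  have hδu : δ' ≫ u⟦(1:ℤ)⟧' = 0 := comp_distTriang_mor_zero₃₁ TK hTK
  have hM : ∀ E ∈ S₁ ∪ S₂, ∀ z : M ⟶ E, z = 0 := by
    intro E hE z
    have h1 : gM ≫ z = 0 := by
      apply (hbij E hE).injective
      show u ≫ gM ≫ z = u ≫ 0
      rw [← Category.assoc, hug, Limits.zero_comp, Limits.comp_zero]
    obtain ⟨z', hz'⟩ := Triangle.yoneda_exact₃ TK hTK z h1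
    have hz'c : z = δ' ≫ z' := hz'
    obtain ⟨z'', hz''⟩ := (bij_pre_shift u hS12shift hbij E hE 1).surjective z'
    have hz''c : u⟦(1:ℤ)⟧' ≫ z'' = z' := hz''
    rw [hz'c, ← hz''c, ← Category.assoc, hδu, Limits.zero_comp]
  have hMgen : ∀ W ∈ gen, ∀ (n : ℤ) (z : (M⟦n⟧ : D) ⟶ W), z = 0 := by
    have hsub : gen ⊆ {W : D | ∀ (n : ℤ) (f : (M⟦n⟧ : D) ⟶ W), f = 0} := by
      apply genTriang_min (leftOrthSub M)
      intro E hE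
      exact fun n g => zero_pre_shift hS12shift hM E hE n g
    intro W hW
    exact hsub hW
  have hMgen0 : ∀ W ∈ gen, ∀ z : M ⟶ W, z = 0 := by
    intro W hW z
    have h0 : ((shiftFunctorZero D ℤ).app M).hom ≫ z = 0 := hMgen W hW 0 _
    have := congrArg (fun t => ((shiftFunctorZero D ℤ).app M).inv ≫ t) h0
    simpa using this
  -- Step 8 : bijectivity for all of gen
  refine ⟨X, hX, u, ?_⟩
  intro W hW
  constructor
  · apply inj_of_ker_pre
    intro v huv
    obtain ⟨z, hz⟩ := Triangle.yoneda_exact₂ TK hTK v huv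
    have hzc : v = gM ≫ z := hz
    rw [hzc, hMgen0 W hW z, Limits.comp_zero]
  · intro h
    have h0 : (TK.invRotate).mor₁ ≫ h = 0 := hMgen W hW (-1) _
    obtain ⟨v, hv⟩ := Triangle.yoneda_exact₂ TK.invRotate
      (inv_rot_of_distTriang TK hTK) h h0
    exact ⟨v, hv.symm⟩

lemma gen_isLeftAdjoint (S₁ S₂ : Set D) (hS₁ : IsTriangulatedSub D S₁)
    (hS₂ : IsTriangulatedSub D S₂) (h21 : S₂ ⊆ rightOrth D S₁)
    (h₁r : (ObjectProperty.ι (· ∈ S₁)).IsLeftAdjoint)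
    (h₂r : (ObjectProperty.ι (· ∈ S₂)).IsLeftAdjoint) :
    (ObjectProperty.ι (· ∈ genTriang D (S₁ ∪ S₂))).IsLeftAdjoint := by
  haveI : ∀ A : D, HasTerminal
      (CostructuredArrow (ObjectProperty.ι (· ∈ genTriang D (S₁ ∪ S₂))) A) := by
    intro A
    obtain ⟨X, hX, f, hbij⟩ := right_universal S₁ S₂ hS₁ hS₂ h21 h₁r h₂r A
    let XX : ObjectProperty.FullSubcategory (· ∈ genTriang D (S₁ ∪ S₂)) := ⟨X, hX⟩
    have hterm : IsTerminal (CostructuredArrow.mk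
        (show (ObjectProperty.ι (· ∈ genTriang D (S₁ ∪ S₂))).obj XX ⟶ A from f)) := by
      apply IsTerminal.ofUniqueHom (fun c => CostructuredArrow.homMk
        (ObjectProperty.homMk <| Exists.choose ((hbij c.left.obj c.left.property).surjective c.hom))
        (Exists.choose_spec ((hbij c.left.obj c.left.property).surjective c.hom)))
      intro c m
      apply CostructuredArrow.hom_ext
      apply ObjectProperty.hom_ext
      apply (hbij c.left.obj c.left.property).injective
      have hc := Exists.choose_spec ((hbij c.left.obj c.left.property).surjective c.hom)
      exact (CostructuredArrow.w m).trans hc.symm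
    exact hterm.hasTerminal
  exact isLeftAdjoint_of_costructuredArrowTerminals _

lemma gen_isRightAdjoint (S₁ S₂ : Set D) (hS₁ : IsTriangulatedSub D S₁)
    (hS₂ : IsTriangulatedSub D S₂) (h21 : S₂ ⊆ rightOrth D S₁)
    (h₁l : (ObjectProperty.ι (· ∈ S₁)).IsRightAdjoint)
    (h₂l : (ObjectProperty.ι (· ∈ S₂)).IsRightAdjoint) :
    (ObjectProperty.ι (· ∈ genTriang D (S₁ ∪ S₂))).IsRightAdjoint := by
  haveI : ∀ A : D, HasInitial
      (StructuredArrow A (ObjectProperty.ι (· ∈ genTriang D (S₁ ∪ S₂)))) := by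
    intro A
    obtain ⟨X, hX, u, hbij⟩ := left_universal S₁ S₂ hS₁ hS₂ h21 h₁l h₂l A
    let XX : ObjectProperty.FullSubcategory (· ∈ genTriang D (S₁ ∪ S₂)) := ⟨X, hX⟩
    have hinit : IsInitial (StructuredArrow.mk
        (show A ⟶ (ObjectProperty.ι (· ∈ genTriang D (S₁ ∪ S₂))).obj XX from u)) := by
      apply IsInitial.ofUniqueHom (fun c => StructuredArrow.homMk
        (ObjectProperty.homMk <| Exists.choose ((hbij c.right.obj c.right.property).surjective c.hom))
        (Exists.choose_spec ((hbij c.right.obj c.right.property).surjective c.hom)))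
      intro c m
      apply StructuredArrow.hom_ext
      apply ObjectProperty.hom_ext
      apply (hbij c.right.obj c.right.property).injective
      have hc := Exists.choose_spec ((hbij c.right.obj c.right.property).surjective c.hom)
      exact (StructuredArrow.w m).trans hc.symm
    exact hinit.hasInitial
  exact isRightAdjointOfStructuredArrowInitials _


theorem stmt2
    (D : Type u) [Category.{v} D] [Preadditive D]
    [HasZeroObject D] [HasShift D ℤ] [∀ n : ℤ, (shiftFunctor D n).Additive]
    [Pretriangulated D]
    (S₁ S₂ : Set D) (hS₁ : IsTriangulatedSub D S₁) (hS₂ : IsTriangulatedSub D S₂)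
    (h21 : S₂ ⊆ rightOrth D S₁)
    (h₁r : (ObjectProperty.ι (· ∈ S₁)).IsLeftAdjoint)
    (h₁l : (ObjectProperty.ι (· ∈ S₁)).IsRightAdjoint)
    (h₂r : (ObjectProperty.ι (· ∈ S₂)).IsLeftAdjoint)
    (h₂l : (ObjectProperty.ι (· ∈ S₂)).IsRightAdjoint) :
    (ObjectProperty.ι (· ∈ genTriang D (S₁ ∪ S₂))).IsLeftAdjoint ∧
      (ObjectProperty.ι (· ∈ genTriang D (S₁ ∪ S₂))).IsRightAdjoint := by
  exact ⟨gen_isLeftAdjoint S₁ S₂ hS₁ hS₂ h21 h₁r h₂r,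
    gen_isRightAdjoint S₁ S₂ hS₁ hS₂ h21 h₁l h₂l⟩
end
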